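/- Let H be a complex Hilbert space, ψ ∈ H a unit vector, t ≥ 0, and let Z_A, X_B, Z_B, D_C be binary observables on H such that Z_A commutes with X_B, Z_B, D_C, and D_C commutes with X_B and Z_B. Write P_A^0 = P⁰(Z_A). If ‖(P_A^0 D_C − (1/√2)·P_A^0 (X_B − Z_B)) ψ‖ ≤ t, then ‖P_A^0 (X_B Z_B + Z_B X_B) ψ‖ ≤ √2·(2 + 2√2)·t. -/

import Mathlib

open scoped ComplexInnerProductSpace

/-- A binary observable: a self-adjoint continuous linear map squaring to the identity. -/
structure IsBinaryObservable {H : Type*} [NormedAddCommGroup H] [InnerProductSpace ℂ H]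
    [CompleteSpace H] (A : H →L[ℂ] H) : Prop where
  selfAdjoint : IsSelfAdjoint A
  mul_self_eq_one : A ∘L A = 1

/-- Projection onto the `+1` eigenspace of a binary observable. -/
noncomputable def projP0 {H : Type*} [NormedAddCommGroup H] [InnerProductSpace ℂ H]
    (Z : H →L[ℂ] H) : H →L[ℂ] H := (2 : ℂ)⁻¹ • (1 + Z)

/-- Projection onto the `−1` eigenspace of a binary observable. -/
noncomputable def projP1 {H : Type*} [NormedAddCommGroup H] [InnerProductSpace ℂ H]
    (Z : H →L[ℂ] H) : H →L[ℂ] H := (2 : ℂ)⁻¹ • (1 - Z)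

lemma IsBinaryObservable.norm_apply {H : Type*} [NormedAddCommGroup H] [InnerProductSpace ℂ H]
    [CompleteSpace H] {A : H →L[ℂ] H} (hA : IsBinaryObservable A) (v : H) : ‖A v‖ = ‖v‖ := by
  have h2 : A (A v) = v := by
    have := congrArg (fun T : H →L[ℂ] H => T v) hA.mul_self_eq_one
    simpa using this
  have hadj : ContinuousLinearMap.adjoint A = A := by
    rw [← ContinuousLinearMap.star_eq_adjoint]; exact hA.selfAdjoint
  have hinner : ⟪A v, A v⟫ = ⟪v, v⟫ := by
    rw [← ContinuousLinearMap.adjoint_inner_left, hadj, h2]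
  rw [@norm_eq_sqrt_re_inner ℂ, @norm_eq_sqrt_re_inner ℂ, hinner]

lemma key_alg {A : Type*} [Ring A] [Module ℂ A] [SMulCommClass ℂ A A] [IsScalarTower ℂ A A]
    (s : ℂ) (hs : s * s = (2:ℂ)⁻¹) (X D PD PX W P M : A)
    (f1 : X * PD = W) (f2 : D * PX = W) (f3 : D * PD = P)
    (f4 : X * PX = (2:ℂ) • P - M) :
    s • (X * (PD - s • PX)) + D * (PD - s • PX) = (2:ℂ)⁻¹ • M := by
  rw [mul_sub, mul_sub, mul_smul_comm, mul_smul_comm, f1, f2, f3, f4]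
  match_scalars
  · ring
  · linear_combination (-2 : ℂ) * hs
  · linear_combination hs

theorem stmt15 {H : Type*} [NormedAddCommGroup H] [InnerProductSpace ℂ H] [CompleteSpace H]
    (ψ : H) (hψ : ‖ψ‖ = 1) (t : ℝ) (ht : 0 ≤ t)
    (ZA XB ZB DC : H →L[ℂ] H)
    (hZA : IsBinaryObservable ZA) (hXB : IsBinaryObservable XB)
    (hZB : IsBinaryObservable ZB) (hDC : IsBinaryObservable DC)
    (hA1 : Commute ZA XB) (hA2 : Commute ZA ZB) (hA3 : Commute ZA DC)
    (hD1 : Commute DC XB) (hD2 : Commute DC ZB)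
    (h : ‖projP0 ZA (DC ψ) - (Real.sqrt 2)⁻¹ • projP0 ZA ((XB - ZB) ψ)‖ ≤ t) :
    ‖projP0 ZA ((XB * ZB + ZB * XB) ψ)‖ ≤ Real.sqrt 2 * (2 + 2 * Real.sqrt 2) * t := by
  set P : H →L[ℂ] H := projP0 ZA with hPdef
  set s : ℂ := ((Real.sqrt 2 : ℝ) : ℂ)⁻¹ with hsdef
  have hs : s * s = (2:ℂ)⁻¹ := by
    rw [hsdef, ← mul_inv, ← Complex.ofReal_mul,
      Real.mul_self_sqrt (by norm_num : (0:ℝ) ≤ 2)]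
    norm_num
  have hXX : XB * XB = 1 := hXB.mul_self_eq_one
  have hZZ : ZB * ZB = 1 := hZB.mul_self_eq_one
  have hDD : DC * DC = 1 := hDC.mul_self_eq_one
  have hPX : Commute P XB := ((Commute.one_left XB).add_left hA1).smul_left _
  have hPZ : Commute P ZB := ((Commute.one_left ZB).add_left hA2).smul_left _
  have hPD : Commute P DC := ((Commute.one_left DC).add_left hA3).smul_left _
  have hPXZ : Commute P (XB - ZB) := hPX.sub_right hPZ
  have hDXZ : Commute DC (XB - ZB) := hD1.sub_right hD2
  set E : H →L[ℂ] H := P * DC - s • (P * (XB - ZB)) with hEdef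
  have hE : ‖E ψ‖ ≤ t := by
    have : E ψ = projP0 ZA (DC ψ) - (Real.sqrt 2)⁻¹ • projP0 ZA ((XB - ZB) ψ) := by
      simp [hEdef, hPdef, ContinuousLinearMap.sub_apply, ContinuousLinearMap.smul_apply,
        ContinuousLinearMap.mul_apply, hsdef, ← Complex.ofReal_inv, Complex.coe_smul]
    rw [this]; exact h
  have f1 : (XB - ZB) * (P * DC) = P * ((XB - ZB) * DC) := by
    rw [← mul_assoc, ← hPXZ.eq, mul_assoc]
  have f2 : DC * (P * (XB - ZB)) = P * ((XB - ZB) * DC) := by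
    rw [← mul_assoc, ← hPD.eq, mul_assoc, hDXZ.eq]
  have f3 : DC * (P * DC) = P := by
    rw [← mul_assoc, ← hPD.eq, mul_assoc, hDD, mul_one]
  have f5 : (XB - ZB) * (XB - ZB) = (2:ℂ) • (1 : H →L[ℂ] H) - (XB * ZB + ZB * XB) := by
    rw [sub_mul, mul_sub, mul_sub, hXX, hZZ, two_smul]
    abel
  have f4 : (XB - ZB) * (P * (XB - ZB))
      = (2:ℂ) • P - P * (XB * ZB + ZB * XB) := by
    rw [← mul_assoc, ← hPXZ.eq, mul_assoc, f5, mul_sub, mul_smul_comm, mul_one]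
  have key : s • ((XB - ZB) * E) + DC * E = (2:ℂ)⁻¹ • (P * (XB * ZB + ZB * XB)) := by
    rw [hEdef]
    exact key_alg s hs (XB - ZB) DC (P * DC) (P * (XB - ZB)) (P * ((XB - ZB) * DC))
      P (P * (XB * ZB + ZB * XB)) f1 f2 f3 f4
  have keyψ : P ((XB * ZB + ZB * XB) ψ)
      = (2:ℂ) • (s • ((XB - ZB) (E ψ)) + DC (E ψ)) := by
    have hv := congrArg (fun T : H →L[ℂ] H => T ψ) key
    simp only [ContinuousLinearMap.add_apply, ContinuousLinearMap.smul_apply,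
      ContinuousLinearMap.mul_apply] at hv
    simp only [ContinuousLinearMap.add_apply, ContinuousLinearMap.mul_apply]
    rw [show P (XB (ZB ψ) + ZB (XB ψ))
        = (2:ℂ) • ((2:ℂ)⁻¹ • P (XB (ZB ψ) + ZB (XB ψ))) by rw [smul_smul]; norm_num,
      ← hv]
  have hXZE : ‖(XB - ZB) (E ψ)‖ ≤ 2 * t := by
    calc ‖(XB - ZB) (E ψ)‖ = ‖XB (E ψ) - ZB (E ψ)‖ := by
          rw [ContinuousLinearMap.sub_apply]
      _ ≤ ‖XB (E ψ)‖ + ‖ZB (E ψ)‖ := norm_sub_le _ _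
      _ = ‖E ψ‖ + ‖E ψ‖ := by rw [hXB.norm_apply, hZB.norm_apply]
      _ ≤ 2 * t := by linarith
  have hDE : ‖DC (E ψ)‖ ≤ t := by rw [hDC.norm_apply]; exact hE
  have hsnorm : ‖s‖ = (Real.sqrt 2)⁻¹ := by
    rw [hsdef, norm_inv, Complex.norm_real, Real.norm_eq_abs,
      abs_of_nonneg (Real.sqrt_nonneg 2)]
  have hsqrt2 : (0:ℝ) < Real.sqrt 2 := Real.sqrt_pos.mpr (by norm_num)
  have h2 : Real.sqrt 2 * Real.sqrt 2 = 2 := Real.mul_self_sqrt (by norm_num)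
  calc ‖P ((XB * ZB + ZB * XB) ψ)‖
      = ‖(2:ℂ)‖ * ‖s • ((XB - ZB) (E ψ)) + DC (E ψ)‖ := by rw [keyψ, norm_smul]
    _ ≤ 2 * (‖s‖ * ‖(XB - ZB) (E ψ)‖ + ‖DC (E ψ)‖) := by
        rw [show ‖(2:ℂ)‖ = 2 by norm_num]
        gcongr
        calc ‖s • ((XB - ZB) (E ψ)) + DC (E ψ)‖
            ≤ ‖s • ((XB - ZB) (E ψ))‖ + ‖DC (E ψ)‖ := norm_add_le _ _
          _ = ‖s‖ * ‖(XB - ZB) (E ψ)‖ + ‖DC (E ψ)‖ := by rw [norm_smul]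
    _ ≤ 2 * ((Real.sqrt 2)⁻¹ * (2 * t) + t) := by
        rw [hsnorm]; gcongr
    _ ≤ Real.sqrt 2 * (2 + 2 * Real.sqrt 2) * t := by
        have hi2 : (Real.sqrt 2)⁻¹ * 2 = Real.sqrt 2 := by
          rw [inv_mul_eq_div, div_eq_iff hsqrt2.ne']
          exact h2.symm
        rw [← mul_assoc, hi2]
        nlinarith [h2, hsqrt2, ht]
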